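/- Let A be an abelian semigroup, M an abelian group, and f : A^n → M a symmetric function that is an additive homomorphism in each of its n variables. If p > n, then for any u_1, …, u_p ∈ A, the iterated difference Δ_{u_1} ⋯ Δ_{u_p} applied to the diagonalisation f* : A → M (defined by f*(a) = f(a, …, a)) is identically zero. -/

import Mathlib

/-- The difference operator: `(deltaOp u f) a = f (a + u) - f a`. -/
def deltaOp {A M : Type*} [Add A] [Sub M] (u : A) (f : A → M) : A → M :=
  fun a => f (a + u) - f a

section Aux

variable {A M : Type*} [AddCommSemigroup A] [AddCommGroup M]

lemma deltaOp_add' (u : A) (f g : A → M) :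
    deltaOp u (f + g) = deltaOp u f + deltaOp u g := by
  funext a; simp only [deltaOp, Pi.add_apply]; abel

lemma deltaOp_zero' (u : A) : deltaOp u (0 : A → M) = 0 := by
  funext a; simp [deltaOp]

lemma deltaOp_sum' {ι : Type*} (u : A) (s : Finset ι) (h : ι → A → M) :
    deltaOp u (∑ t ∈ s, h t) = ∑ t ∈ s, deltaOp u (h t) := by
  classical
  induction s using Finset.induction_on with
  | empty => simp [deltaOp_zero']
  | insert _ _ hj ih => rw [Finset.sum_insert hj, Finset.sum_insert hj, deltaOp_add', ih]

lemma deltaOp_comm' (u v : A) (f : A → M) :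
    deltaOp u (deltaOp v f) = deltaOp v (deltaOp u f) := by
  funext a
  simp only [deltaOp]
  rw [add_right_comm]
  abel

lemma foldr_deltaOp_comm (u : A) (L : List A) (f : A → M) :
    deltaOp u (List.foldr deltaOp f L) = List.foldr deltaOp (deltaOp u f) L := by
  induction L with
  | nil => rfl
  | cons v L ih => simp only [List.foldr_cons]; rw [deltaOp_comm', ih]

lemma foldr_deltaOp_sum {ι : Type*} (L : List A) (s : Finset ι) (h : ι → A → M) :
    List.foldr deltaOp (∑ t ∈ s, h t) L = ∑ t ∈ s, List.foldr deltaOp (h t) L := by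
  induction L with
  | nil => rfl
  | cons v L ih => simp only [List.foldr_cons, ih, deltaOp_sum']

/-- Multilinear expansion of `f` over the set `S` of coordinates. -/
lemma expand_multilinear {n : ℕ} (f : (Fin n → A) → M)
    (hadd : ∀ (i : Fin n) (x : Fin n → A) (a b : A),
      f (Function.update x i (a + b)) = f (Function.update x i a) + f (Function.update x i b))
    (S : Finset (Fin n)) : ∀ x y w : Fin n → A,
    f (fun i => if i ∈ S then x i + y i else w i)
      = ∑ T ∈ S.powerset, f (fun i => if i ∈ T then x i else if i ∈ S then y i else w i) := by
  classical
  induction S using Finset.induction_on with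
  | empty => intro x y w; simp
  | @insert j S hj ih =>
    intro x y w
    have h1 : (fun i => if i ∈ insert j S then x i + y i else w i)
        = Function.update (fun i => if i ∈ S then x i + y i else w i) j (x j + y j) := by
      funext i
      rcases eq_or_ne i j with rfl | hij
      · simp [hj]
      · simp [Function.update_of_ne hij, Finset.mem_insert, hij]
    rw [h1, hadd, Finset.sum_powerset_insert hj]
    have hx : f (Function.update (fun i => if i ∈ S then x i + y i else w i) j (x j)) =
        ∑ T ∈ S.powerset, f (fun i => if i ∈ insert j T then x i
          else if i ∈ insert j S then y i else w i) := by
      have := ih x y (Function.update w j (x j))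
      have e1 : (fun i => if i ∈ S then x i + y i else Function.update w j (x j) i)
          = Function.update (fun i => if i ∈ S then x i + y i else w i) j (x j) := by
        funext i
        rcases eq_or_ne i j with rfl | hij
        · simp [hj]
        · simp [Function.update_of_ne hij, hij]
      rw [e1] at this
      rw [this]
      refine Finset.sum_congr rfl fun T hT => ?_
      have hTS : T ⊆ S := Finset.mem_powerset.mp hT
      congr 1
      funext i
      rcases eq_or_ne i j with rfl | hij
      · have hiT : i ∉ T := fun h => hj (hTS h)
        simp [hiT, hj]
      · simp [Function.update_of_ne hij, Finset.mem_insert, hij]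
    have hy : f (Function.update (fun i => if i ∈ S then x i + y i else w i) j (y j)) =
        ∑ T ∈ S.powerset, f (fun i => if i ∈ T then x i
          else if i ∈ insert j S then y i else w i) := by
      have := ih x y (Function.update w j (y j))
      have e1 : (fun i => if i ∈ S then x i + y i else Function.update w j (y j) i)
          = Function.update (fun i => if i ∈ S then x i + y i else w i) j (y j) := by
        funext i
        rcases eq_or_ne i j with rfl | hij
        · simp [hj]
        · simp [Function.update_of_ne hij, hij]
      rw [e1] at this
      rw [this]
      refine Finset.sum_congr rfl fun T hT => ?_
      have hTS : T ⊆ S := Finset.mem_powerset.mp hT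
      congr 1
      funext i
      rcases eq_or_ne i j with rfl | hij
      · have hiT : i ∉ T := fun h => hj (hTS h)
        simp [hiT, hj]
      · simp [Function.update_of_ne hij, Finset.mem_insert, hij]
    rw [hx, hy]
    exact add_comm _ _

/-- The function obtained from `f` by plugging the variable `a` into coordinates in `S`
and fixed values `w` elsewhere. -/
def gFun {n : ℕ} (f : (Fin n → A) → M) (S : Finset (Fin n)) (w : Fin n → A) : A → M :=
  fun a => f (fun i => if i ∈ S then a else w i)

lemma deltaOp_gFun {n : ℕ} (f : (Fin n → A) → M)
    (hadd : ∀ (i : Fin n) (x : Fin n → A) (a b : A),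
      f (Function.update x i (a + b)) = f (Function.update x i a) + f (Function.update x i b))
    (S : Finset (Fin n)) (w : Fin n → A) (u : A) :
    deltaOp u (gFun f S w)
      = ∑ T ∈ S.powerset.erase ∅, gFun f (S \ T) (fun i => if i ∈ T then u else w i) := by
  classical
  funext a
  have key := expand_multilinear f hadd S (fun _ => u) (fun _ => a) w
  have e1 : (fun i => if i ∈ S then a + u else w i)
      = (fun i => if i ∈ S then u + a else w i) := by
    funext i; rw [add_comm]
  have hsplit : ∑ T ∈ S.powerset, f (fun i => if i ∈ T then u else if i ∈ S then a else w i)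
      = (∑ T ∈ S.powerset.erase ∅,
          f (fun i => if i ∈ T then u else if i ∈ S then a else w i))
        + f (fun i => if i ∈ (∅ : Finset (Fin n)) then u else if i ∈ S then a else w i) := by
    rw [Finset.sum_erase_add]
    exact Finset.empty_mem_powerset S
  simp only [deltaOp, gFun, e1, key, hsplit, Finset.notMem_empty, if_false]
  rw [add_sub_cancel_right]
  rw [Finset.sum_apply]
  refine Finset.sum_congr rfl fun T hT => ?_
  have hTS : T ⊆ S := Finset.mem_powerset.mp (Finset.mem_of_mem_erase hT)
  congr 1
  funext i
  by_cases hiT : i ∈ T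
  · simp [hiT, Finset.mem_sdiff]
  · by_cases hiS : i ∈ S
    · simp [hiT, hiS, Finset.mem_sdiff]
    · have : i ∉ T := hiT
      simp [hiT, hiS, Finset.mem_sdiff]

lemma foldr_deltaOp_zero (L : List A) :
    List.foldr deltaOp (0 : A → M) L = 0 := by
  induction L with
  | nil => rfl
  | cons v L ih => simp only [List.foldr_cons, ih, deltaOp_zero']

lemma foldr_gFun_eq_zero {n : ℕ} (f : (Fin n → A) → M)
    (hadd : ∀ (i : Fin n) (x : Fin n → A) (a b : A),
      f (Function.update x i (a + b)) = f (Function.update x i a) + f (Function.update x i b)) :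
    ∀ (L : List A) (S : Finset (Fin n)) (w : Fin n → A), S.card < L.length →
      List.foldr deltaOp (gFun f S w) L = 0 := by
  classical
  intro L
  induction L with
  | nil => intro S w h; simp at h
  | cons u L ih =>
    intro S w h
    rw [List.foldr_cons, foldr_deltaOp_comm, deltaOp_gFun f hadd, foldr_deltaOp_sum]
    apply Finset.sum_eq_zero
    intro T hT
    have hTS : T ⊆ S := Finset.mem_powerset.mp (Finset.mem_of_mem_erase hT)
    have hTne : T.Nonempty := Finset.nonempty_iff_ne_empty.mpr (Finset.ne_of_mem_erase hT)
    apply ih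
    have h1 : (S \ T).card < S.card :=
      Finset.card_lt_card (Finset.sdiff_ssubset hTS hTne)
    have h2 : S.card < L.length + 1 := by simpa using h
    omega

end Aux

theorem stmt2 {A M : Type*} [AddCommSemigroup A] [AddCommGroup M]
    {n : ℕ} (f : (Fin n → A) → M)
    (hsym : ∀ (σ : Equiv.Perm (Fin n)) (x : Fin n → A), f (x ∘ σ) = f x)
    (hadd : ∀ (i : Fin n) (x : Fin n → A) (a b : A),
      f (Function.update x i (a + b)) = f (Function.update x i a) + f (Function.update x i b))
    {p : ℕ} (hp : n < p) (u : Fin p → A) :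
    List.foldr deltaOp (fun a => f (fun _ => a)) (List.ofFn u) = 0 := by
  classical
  have hp0 : 0 < p := lt_of_le_of_lt (Nat.zero_le n) hp
  set w : Fin n → A := fun _ => u ⟨0, hp0⟩ with hw
  have hbase : (fun a => f (fun _ => a)) = gFun f Finset.univ w := by
    funext a; simp [gFun]
  rw [hbase]
  apply foldr_gFun_eq_zero f hadd
  simpa using hp
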